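/- For positive definite matrices X_1,...,X_K, the map Λ ↦ Σ_i X_i Λ X_i on symmetric n×n matrices is a linear bijection; in particular, for any symmetric matrix S there exists a unique symmetric Λ with Σ_i X_i Λ X_i = S. -/

import Mathlib

open Matrix

private lemma trace_transpose_mul_self_nonneg {n : ℕ} (M : Matrix (Fin n) (Fin n) ℝ) :
    0 ≤ (Mᵀ * M).trace := by
  have h : (Mᵀ * M).trace = ∑ i, ∑ j, (M j i)^2 := by
    simp [Matrix.trace, Matrix.diag, Matrix.mul_apply, sq]
  rw [h]
  positivity

private lemma eq_zero_of_trace_transpose_mul_self {n : ℕ} (M : Matrix (Fin n) (Fin n) ℝ)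
    (h : (Mᵀ * M).trace = 0) : M = 0 := by
  have h' : (Mᵀ * M).trace = ∑ i, ∑ j, (M j i)^2 := by
    simp [Matrix.trace, Matrix.diag, Matrix.mul_apply, sq]
  rw [h'] at h
  ext j i
  have h1 : ∀ i ∈ Finset.univ, (0:ℝ) ≤ ∑ j, (M j i)^2 := fun i _ => by positivity
  have h2 := (Finset.sum_eq_zero_iff_of_nonneg h1).mp h i (Finset.mem_univ i)
  have h3 : ∀ j ∈ Finset.univ, (0:ℝ) ≤ (M j i)^2 := fun j _ => by positivity
  have := (Finset.sum_eq_zero_iff_of_nonneg h3).mp h2 j (Finset.mem_univ j)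
  simpa [pow_eq_zero_iff] using this

private lemma key_injective {n K : ℕ} (hK : 1 ≤ K)
    (X : Fin K → Matrix (Fin n) (Fin n) ℝ) (hX : ∀ i, (X i).PosDef) :
    Function.Injective (fun Λ : Matrix (Fin n) (Fin n) ℝ => ∑ i, X i * Λ * X i) := by
  have key : ∀ Λ : Matrix (Fin n) (Fin n) ℝ, (∑ i, X i * Λ * X i) = 0 → Λ = 0 := by
    intro Λ hΛ
    obtain ⟨R, hRR, hRsymm⟩ : ∃ R : Fin K → Matrix (Fin n) (Fin n) ℝ,
        (∀ i, R i * R i = X i) ∧ ∀ i, (R i)ᵀ = R i := by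
      open scoped MatrixOrder in
      exact ⟨fun i => CFC.sqrt (X i), fun i => CFC.sqrt_mul_sqrt_self (X i) (hX i).posSemidef.nonneg,
        fun i => (CFC.sqrt_nonneg (X i)).posSemidef.isHermitian⟩
    have hRdet : ∀ i, IsUnit (R i).det := by
      intro i
      have hx : (X i).det ≠ 0 := ne_of_gt (hX i).det_pos
      rw [← hRR i, Matrix.det_mul] at hx
      exact isUnit_iff_ne_zero.mpr (fun h => hx (by rw [h, zero_mul]))
    have htr : ∀ i, ((R i * Λ * R i)ᵀ * (R i * Λ * R i)).trace
        = (Λᵀ * (X i * Λ * X i)).trace := by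
      intro i
      have h1 : (R i * Λ * R i)ᵀ * (R i * Λ * R i)
          = R i * (Λᵀ * (R i * R i) * Λ * R i) := by
        simp only [Matrix.transpose_mul, hRsymm, Matrix.mul_assoc]
      rw [h1, Matrix.trace_mul_comm]
      rw [show Λᵀ * (R i * R i) * Λ * R i * R i
          = Λᵀ * ((R i * R i) * Λ * (R i * R i)) by noncomm_ring, hRR i]
    have htot : ∑ i, ((R i * Λ * R i)ᵀ * (R i * Λ * R i)).trace = 0 := by
      have h2 : ∑ i, (Λᵀ * (X i * Λ * X i)).trace = (Λᵀ * ∑ i, X i * Λ * X i).trace := by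
        rw [Finset.mul_sum, Matrix.trace_sum]
      rw [Finset.sum_congr rfl (fun i _ => htr i), h2, hΛ, Matrix.mul_zero, Matrix.trace_zero]
    have hzero : ∀ i ∈ Finset.univ, ((R i * Λ * R i)ᵀ * (R i * Λ * R i)).trace = 0 :=
      (Finset.sum_eq_zero_iff_of_nonneg
        (fun i _ => trace_transpose_mul_self_nonneg _)).mp htot
    have i0 : Fin K := ⟨0, hK⟩
    have hM : R i0 * Λ * R i0 = 0 :=
      eq_zero_of_trace_transpose_mul_self _ (hzero i0 (Finset.mem_univ i0))
    have h1 : Λ * R i0 = 0 := by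
      have := congrArg (fun M => (R i0)⁻¹ * M) hM
      simpa [← Matrix.mul_assoc, Matrix.nonsing_inv_mul _ (hRdet i0)] using this
    have := congrArg (fun M => M * (R i0)⁻¹) h1
    simpa [Matrix.mul_assoc, Matrix.mul_nonsing_inv _ (hRdet i0)] using this
  intro a b hab
  have hsub : (∑ i, X i * (a - b) * X i) = 0 := by
    simp only [Matrix.mul_sub, Matrix.sub_mul, Finset.sum_sub_distrib]
    simpa [sub_eq_zero] using hab
  exact sub_eq_zero.mp (key _ hsub)

theorem simplex_linear_system_bijective {n K : ℕ} (hn : 1 ≤ n) (hK : 1 ≤ K)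
    (X : Fin K → Matrix (Fin n) (Fin n) ℝ) (hX : ∀ i, (X i).PosDef)
    (S : Matrix (Fin n) (Fin n) ℝ) (hS : S.IsSymm) :
    ∃! Λ : Matrix (Fin n) (Fin n) ℝ, Λ.IsSymm ∧ ∑ i, X i * Λ * X i = S := by
  set T : Matrix (Fin n) (Fin n) ℝ →ₗ[ℝ] Matrix (Fin n) (Fin n) ℝ :=
    { toFun := fun Λ => ∑ i, X i * Λ * X i
      map_add' := fun a b => by
        simp [Matrix.mul_add, Matrix.add_mul, Finset.sum_add_distrib]
      map_smul' := fun c a => by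
        simp [Matrix.mul_smul, Matrix.smul_mul, Finset.smul_sum] } with hT
  have hinj : Function.Injective T := key_injective hK X hX
  have hsurj : Function.Surjective T :=
    (LinearMap.injective_iff_surjective).mp hinj
  obtain ⟨Λ, hΛ⟩ := hsurj S
  have hXsymm : ∀ i, (X i)ᵀ = X i := fun i => (hX i).isHermitian
  have hTt : ∀ A : Matrix (Fin n) (Fin n) ℝ, T Aᵀ = (T A)ᵀ := by
    intro A
    simp only [hT, LinearMap.coe_mk, AddHom.coe_mk, Matrix.transpose_sum,
      Matrix.transpose_mul, hXsymm, Matrix.mul_assoc]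
  have hΛsymm : Λ.IsSymm := by
    have h : T Λᵀ = T Λ := by
      rw [hTt, hΛ]; exact hS
    exact hinj h
  refine ⟨Λ, ⟨hΛsymm, hΛ⟩, ?_⟩
  rintro Λ' ⟨-, hΛ'⟩
  exact hinj (hΛ'.trans hΛ.symm)
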